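/- Suppose E_{(λ_0,…,λ_n)} is an extended Chebyshev system for the two-point set {a,b}, where a ≠ b are real. Then E_{(λ_0,…,λ_n)} is closed under complex conjugation if and only if every Bernstein basis function p_{n,k}, k = 0,…,n, is real-valued on ℝ. -/

import Mathlib

open Filter Topology Set

noncomputable section

/-- The differential operator `(d/dx − λ₀)⋯(d/dx − λₙ)` applied to `f`,
where `λ₀,…,λₙ` are the entries of the list. -/
def LOp : List ℂ → (ℝ → ℂ) → (ℝ → ℂ)
  | [], f => f
  | c :: r, f => LOp r (fun x => deriv f x - c * f x)

/-- The space `E_Λ` of exponential polynomials with eigenvalue vector `l`. -/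
def ExpPoly (l : List ℂ) : Set (ℝ → ℂ) :=
  {f | ContDiff ℝ (⊤ : ℕ∞) f ∧ LOp l f = 0}

/-- `f` has a zero of order (multiplicity) exactly `k` at `x₀`. -/
def HasZeroOfOrder (f : ℝ → ℂ) (x₀ : ℝ) (k : ℕ) : Prop :=
  (∀ j < k, iteratedDeriv j f x₀ = 0) ∧ iteratedDeriv k f x₀ ≠ 0

/-- `E_l` (with `l.length = n + 1`) is an extended Chebyshev system for `A ⊆ ℝ`:
every nonzero member has at most `n` zeros in `A`, counted with multiplicity. -/
def IsExtChebyshev (l : List ℂ) (A : Set ℝ) : Prop :=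
  ∀ f ∈ ExpPoly l, f ≠ 0 → ∀ (s : Finset ℝ) (m : ℝ → ℕ),
    (↑s : Set ℝ) ⊆ A → (∀ x ∈ s, ∀ j < m x, iteratedDeriv j f x = 0) →
    ∑ x ∈ s, m x ≤ l.length - 1

/-- `p k`, `k = 0,…,n` (with `l.length = n + 1`) is the normalized Bernstein basis of
`E_l` for the points `a ≠ b`: `p k` lies in `E_l`, has a zero of order exactly `k`
at `a`, a zero of order exactly `n − k` at `b`, and `(p k)^{(k)}(a) = 1`. -/
def IsBernsteinBasis (l : List ℂ) (a b : ℝ) (p : ℕ → ℝ → ℂ) : Prop :=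
  ∀ k ≤ l.length - 1,
    p k ∈ ExpPoly l ∧ HasZeroOfOrder (p k) a k ∧
      HasZeroOfOrder (p k) b (l.length - 1 - k) ∧ iteratedDeriv k (p k) a = 1

/-- `E_l` is closed under (pointwise) complex conjugation. -/
def ConjClosed (l : List ℂ) : Prop :=
  ∀ f ∈ ExpPoly l, (fun x => starRingEnd ℂ (f x)) ∈ ExpPoly l

lemma iteratedDeriv_conj (f : ℝ → ℂ) (n : ℕ) (x : ℝ) :
    iteratedDeriv n (fun y => starRingEnd ℂ (f y)) x = starRingEnd ℂ (iteratedDeriv n f x) := by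
  induction n generalizing f with
  | zero => simp
  | succ n ih =>
    rw [iteratedDeriv_succ', iteratedDeriv_succ']
    have h : (deriv fun y => starRingEnd ℂ (f y)) = fun y => starRingEnd ℂ (deriv f y) := by
      funext y
      simp only [starRingEnd_apply]
      exact deriv.star
    rw [h, ih]

lemma itd_sub {f g : ℝ → ℂ} (hf : ContDiff ℝ (⊤ : ℕ∞) f) (hg : ContDiff ℝ (⊤ : ℕ∞) g)
    (n : ℕ) (x : ℝ) :
    iteratedDeriv n (fun y => f y - g y) x = iteratedDeriv n f x - iteratedDeriv n g x := by
  rw [← iteratedDerivWithin_univ, ← iteratedDerivWithin_univ, ← iteratedDerivWithin_univ]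
  exact iteratedDerivWithin_sub (Set.mem_univ x) uniqueDiffOn_univ
    (hf.contDiffWithinAt.of_le (by exact_mod_cast le_top))
    (hg.contDiffWithinAt.of_le (by exact_mod_cast le_top))

lemma itd_const_mul {f : ℝ → ℂ} (hf : ContDiff ℝ (⊤ : ℕ∞) f) (c : ℂ) (n : ℕ) (x : ℝ) :
    iteratedDeriv n (fun y => c * f y) x = c * iteratedDeriv n f x := by
  rw [← iteratedDerivWithin_univ, ← iteratedDerivWithin_univ]
  simpa [smul_eq_mul] using iteratedDerivWithin_const_smul (Set.mem_univ x) uniqueDiffOn_univ c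
    (hf.of_le (mod_cast le_top)).contDiffOn (f := f) (n := n)

lemma deriv_smooth {f : ℝ → ℂ} (hf : ContDiff ℝ (⊤ : ℕ∞) f) :
    ContDiff ℝ (⊤ : ℕ∞) (deriv f) := (contDiff_infty_iff_deriv.mp hf).2

lemma LOp_sub (l : List ℂ) (f g : ℝ → ℂ) (hf : ContDiff ℝ (⊤ : ℕ∞) f)
    (hg : ContDiff ℝ (⊤ : ℕ∞) g) :
    LOp l (fun x => f x - g x) = fun x => LOp l f x - LOp l g x := by
  induction l generalizing f g with
  | nil => rfl
  | cons c r ih =>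
    show LOp r _ = _
    have h1 : (fun x => deriv (fun y => f y - g y) x - c * (f x - g x))
        = fun x => (deriv f x - c * f x) - (deriv g x - c * g x) := by
      funext x
      rw [deriv_fun_sub ((hf.differentiable (by simp)) x)
        ((hg.differentiable (by simp)) x)]
      ring
    rw [h1, ih _ _ ((deriv_smooth hf).sub (contDiff_const.mul hf))
      ((deriv_smooth hg).sub (contDiff_const.mul hg))]
    rfl

lemma LOp_add (l : List ℂ) (f g : ℝ → ℂ) (hf : ContDiff ℝ (⊤ : ℕ∞) f)
    (hg : ContDiff ℝ (⊤ : ℕ∞) g) :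
    LOp l (fun x => f x + g x) = fun x => LOp l f x + LOp l g x := by
  induction l generalizing f g with
  | nil => rfl
  | cons c r ih =>
    show LOp r _ = _
    have h1 : (fun x => deriv (fun y => f y + g y) x - c * (f x + g x))
        = fun x => (deriv f x - c * f x) + (deriv g x - c * g x) := by
      funext x
      rw [deriv_fun_add ((hf.differentiable (by simp)) x)
        ((hg.differentiable (by simp)) x)]
      ring
    rw [h1, ih _ _ ((deriv_smooth hf).sub (contDiff_const.mul hf))
      ((deriv_smooth hg).sub (contDiff_const.mul hg))]
    rfl

lemma LOp_smul (l : List ℂ) (f : ℝ → ℂ) (c : ℂ) (hf : ContDiff ℝ (⊤ : ℕ∞) f) :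
    LOp l (fun x => c * f x) = fun x => c * LOp l f x := by
  induction l generalizing f with
  | nil => rfl
  | cons d r ih =>
    show LOp r _ = _
    have h1 : (fun x => deriv (fun y => c * f y) x - d * (c * f x))
        = fun x => c * (deriv f x - d * f x) := by
      funext x
      rw [deriv_const_mul c ((hf.differentiable (by simp)) x)]
      ring
    rw [h1, ih _ ((deriv_smooth hf).sub (contDiff_const.mul hf))]
    rfl

lemma LOp_zero (l : List ℂ) : LOp l (fun _ => (0 : ℂ)) = 0 := by
  induction l with
  | nil => rfl
  | cons c r ih =>
    show LOp r _ = 0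
    have h1 : (fun x => deriv (fun _ : ℝ => (0 : ℂ)) x - c * 0) = fun _ : ℝ => (0 : ℂ) := by
      funext x; simp
    rw [h1, ih]

lemma ExpPoly_sub {l : List ℂ} {f g : ℝ → ℂ} (hf : f ∈ ExpPoly l) (hg : g ∈ ExpPoly l) :
    (fun x => f x - g x) ∈ ExpPoly l := by
  refine ⟨hf.1.sub hg.1, ?_⟩
  rw [LOp_sub l f g hf.1 hg.1, hf.2, hg.2]
  funext x; simp

lemma ExpPoly_add {l : List ℂ} {f g : ℝ → ℂ} (hf : f ∈ ExpPoly l) (hg : g ∈ ExpPoly l) :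
    (fun x => f x + g x) ∈ ExpPoly l := by
  refine ⟨hf.1.add hg.1, ?_⟩
  rw [LOp_add l f g hf.1 hg.1, hf.2, hg.2]
  funext x; simp

lemma ExpPoly_smul {l : List ℂ} {f : ℝ → ℂ} (c : ℂ) (hf : f ∈ ExpPoly l) :
    (fun x => c * f x) ∈ ExpPoly l := by
  refine ⟨contDiff_const.mul hf.1, ?_⟩
  rw [LOp_smul l f c hf.1, hf.2]
  funext x; simp

lemma ExpPoly_zero {l : List ℂ} : (fun _ : ℝ => (0 : ℂ)) ∈ ExpPoly l :=
  ⟨contDiff_const, LOp_zero l⟩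

lemma ExpPoly_sum {l : List ℂ} {ι : Type*} (s : Finset ι) (F : ι → ℝ → ℂ)
    (h : ∀ i ∈ s, F i ∈ ExpPoly l) :
    (fun x => ∑ i ∈ s, F i x) ∈ ExpPoly l := by
  classical
  induction s using Finset.induction with
  | empty => simpa using (ExpPoly_zero (l := l))
  | insert a s hni ih =>
    have h1 : (fun x => ∑ i ∈ insert a s, F i x) = fun x => F a x + ∑ i ∈ s, F i x := by
      funext x; rw [Finset.sum_insert hni]
    rw [h1]
    exact ExpPoly_add (h a (Finset.mem_insert_self a s))
      (ih fun i hi => h i (Finset.mem_insert_of_mem hi))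

lemma eq_zero_of_many_zeros {l : List ℂ} {a b : ℝ} (hab : a ≠ b)
    (hcheb : IsExtChebyshev l {a, b}) {g : ℝ → ℂ} (hg : g ∈ ExpPoly l) (ma mb : ℕ)
    (ha : ∀ j < ma, iteratedDeriv j g a = 0) (hb : ∀ j < mb, iteratedDeriv j g b = 0)
    (hlen : l.length - 1 < ma + mb) : g = 0 := by
  by_contra hne
  have key := hcheb g hg hne {a, b} (fun x => if x = a then ma else mb) ?_ ?_
  · rw [Finset.sum_pair hab, if_pos rfl, if_neg (Ne.symm hab)] at key
    omega
  · intro x hx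
    simp only [Finset.coe_insert, Finset.coe_singleton] at hx ⊢
    exact hx
  · intro x hx j hj
    rcases Finset.mem_insert.mp hx with h | h
    · subst h
      simp only [if_pos rfl] at hj
      exact ha j hj
    · have hxb : x = b := Finset.mem_singleton.mp h
      subst hxb
      simp only [if_neg (Ne.symm hab)] at hj
      exact hb j hj

/-- **Proposition.** Suppose `E_{(λ_0,…,λ_n)}` is an extended Chebyshev system for the
two-point set `{a,b}`, `a ≠ b` real, and let `p k`, `k = 0,…,n`, be the Bernstein
basis of `E_{(λ_0,…,λ_n)}` for `a ≠ b`.  Then `E_{(λ_0,…,λ_n)}` is closed under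
complex conjugation if and only if every `p k` is real-valued on `ℝ`. -/
theorem conjClosed_iff_bernstein_real (l : List ℂ) (a b : ℝ) (hab : a ≠ b)
    (hcheb : IsExtChebyshev l {a, b})
    (p : ℕ → ℝ → ℂ) (hp : IsBernsteinBasis l a b p) :
    ConjClosed l ↔ ∀ k ≤ l.length - 1, ∀ x : ℝ, (p k x).im = 0 := by
  constructor
  · intro hcc k hk x
    obtain ⟨hmem, hza, hzb, hnorm⟩ := hp k hk
    have hqmem : (fun y => starRingEnd ℂ (p k y)) ∈ ExpPoly l := hcc _ hmem
    have hgmem := ExpPoly_sub hmem hqmem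
    have hzero : (fun y => p k y - starRingEnd ℂ (p k y)) = 0 := by
      refine eq_zero_of_many_zeros hab hcheb hgmem (k + 1) (l.length - 1 - k) ?_ ?_ (by omega)
      · intro j hj
        rw [itd_sub hmem.1 hqmem.1, iteratedDeriv_conj]
        rcases Nat.lt_succ_iff_lt_or_eq.mp hj with h | h
        · rw [hza.1 j h]; simp
        · subst h; rw [hnorm]; simp
      · intro j hj
        rw [itd_sub hmem.1 hqmem.1, iteratedDeriv_conj, hzb.1 j hj]
        simp
    have hx := congrFun hzero x
    simp only [Pi.zero_apply, sub_eq_zero] at hx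
    exact Complex.conj_eq_iff_im.mp hx.symm
  · intro hreal f hf
    by_cases hN : l.length = 0
    · have hl : l = [] := List.length_eq_zero_iff.mp hN
      subst hl
      have hf0 : f = 0 := hf.2
      have h1 : (fun x => starRingEnd ℂ (f x)) = fun _ : ℝ => (0 : ℂ) := by
        funext x; rw [hf0]; simp
      rw [h1]
      exact ⟨contDiff_const, rfl⟩
    · set N := l.length with hNdef
      have main : ∀ i, i ≤ N → ∃ c : ℕ → ℂ, ∀ j < i,
          iteratedDeriv j (fun x => f x - ∑ k ∈ Finset.range i, c k * p k x) a = 0 := by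
        intro i
        induction i with
        | zero => exact fun _ => ⟨fun _ => 0, fun j hj => absurd hj (by omega)⟩
        | succ i ih =>
          intro hi
          obtain ⟨c, hc⟩ := ih (by omega)
          obtain ⟨hpi_mem, hpa, -, hpnorm⟩ := hp i (by omega)
          have hpk_smooth : ∀ k < i, ContDiff ℝ (⊤ : ℕ∞) (p k) := by
            intro k hk
            exact ((hp k (by omega)).1).1
          have hgsm : ContDiff ℝ (⊤ : ℕ∞) (fun x => f x - ∑ k ∈ Finset.range i, c k * p k x) :=
            hf.1.sub (ContDiff.sum fun k hk =>
              contDiff_const.mul (hpk_smooth k (Finset.mem_range.mp hk)))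
          set d : ℂ := iteratedDeriv i (fun x => f x - ∑ k ∈ Finset.range i, c k * p k x) a
            with hd
          refine ⟨Function.update c i d, ?_⟩
          have hrw : (fun x => f x - ∑ k ∈ Finset.range (i + 1), Function.update c i d k * p k x)
              = fun x => (f x - ∑ k ∈ Finset.range i, c k * p k x) - d * p i x := by
            funext x
            rw [Finset.sum_range_succ, Function.update_self]
            rw [Finset.sum_congr rfl (fun k hk =>  by
              rw [Function.update_of_ne (by have := Finset.mem_range.mp hk; omega) d c])]
            ring
          intro j hj
          rw [hrw, itd_sub hgsm (contDiff_const.mul hpi_mem.1),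
            itd_const_mul hpi_mem.1]
          rcases Nat.lt_succ_iff_lt_or_eq.mp hj with h | h
          · rw [hc j h, hpa.1 j h]; ring
          · subst h; rw [← hd, hpnorm]; ring
      obtain ⟨c, hc⟩ := main N le_rfl
      have hsum_mem : (fun x => ∑ k ∈ Finset.range N, c k * p k x) ∈ ExpPoly l :=
        ExpPoly_sum _ _ fun k hk =>
          ExpPoly_smul _ ((hp k (by have := Finset.mem_range.mp hk; omega)).1)
      have hgmem := ExpPoly_sub hf hsum_mem
      have hzero : (fun x => f x - ∑ k ∈ Finset.range N, c k * p k x) = 0 :=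
        eq_zero_of_many_zeros hab hcheb hgmem N 0 hc (fun j hj => absurd hj (by omega))
          (by omega)
      have hfx : ∀ x, f x = ∑ k ∈ Finset.range N, c k * p k x := by
        intro x
        have := congrFun hzero x
        simp only [Pi.zero_apply, sub_eq_zero] at this
        exact this
      have h1 : (fun x => starRingEnd ℂ (f x))
          = fun x => ∑ k ∈ Finset.range N, starRingEnd ℂ (c k) * p k x := by
        funext x
        rw [hfx x, map_sum]
        refine Finset.sum_congr rfl fun k hk => ?_
        rw [map_mul]
        congr 1
        exact Complex.conj_eq_iff_im.mpr
          (hreal k (by have := Finset.mem_range.mp hk; omega) x)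
      rw [h1]
      exact ExpPoly_sum _ _ fun k hk =>
        ExpPoly_smul _ ((hp k (by have := Finset.mem_range.mp hk; omega)).1)
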